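/- If G is a semi-comparability graph (an ordered graph with no four vertices a<b<c<d with ab, bc, cd edges and ac, bd non-edges) with clique number at most k, then G can be properly colored with at most k(k+1)/2 colors. -/

import Mathlib

open Finset

section Aux

/-- triangular numbers -/
private def triAux : ℕ → ℕ
  | 0 => 0
  | n + 1 => triAux n + (n + 1)

private lemma triAux_mono : Monotone triAux :=
  monotone_nat_of_le_succ fun n => by simp [triAux]

private lemma two_mul_triAux (n : ℕ) : 2 * triAux n = n * (n + 1) := by
  induction n with
  | zero => rfl
  | succ n ih =>
    show 2 * (triAux n + (n + 1)) = _
    rw [Nat.mul_add, ih]; ring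

variable {V : Type*} [Fintype V] [LinearOrder V] (G : SimpleGraph V)

open scoped Classical in
/-- cliques among vertices `≤ v` containing `v` -/
private noncomputable def leftCliqueSets (v : V) : Finset (Finset V) :=
  univ.powerset.filter fun C => G.IsClique ↑C ∧ v ∈ C ∧ ∀ x ∈ C, x ≤ v

open scoped Classical in
/-- left cliques at `v` all of whose members are adjacent to every later neighbor of `v` -/
private noncomputable def strongCliqueSets (v : V) : Finset (Finset V) :=
  univ.powerset.filter fun C => G.IsClique ↑C ∧ v ∈ C ∧ (∀ x ∈ C, x ≤ v) ∧
    ∀ x ∈ C, ∀ d, v < d → G.Adj v d → G.Adj x d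

private lemma mem_leftCliqueSets {v : V} {C : Finset V} :
    C ∈ leftCliqueSets G v ↔ G.IsClique ↑C ∧ v ∈ C ∧ ∀ x ∈ C, x ≤ v := by
  classical
  simp [leftCliqueSets]

private lemma mem_strongCliqueSets {v : V} {C : Finset V} :
    C ∈ strongCliqueSets G v ↔ G.IsClique ↑C ∧ v ∈ C ∧ (∀ x ∈ C, x ≤ v) ∧
      ∀ x ∈ C, ∀ d, v < d → G.Adj v d → G.Adj x d := by
  classical
  simp [strongCliqueSets]

private noncomputable def lcNum (v : V) : ℕ := (leftCliqueSets G v).sup card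

private noncomputable def scNum (v : V) : ℕ := (strongCliqueSets G v).sup card

private lemma singleton_mem_strong (v : V) : {v} ∈ strongCliqueSets G v := by
  rw [mem_strongCliqueSets]
  refine ⟨by simpa using G.isClique_singleton v, by simp, by simp, ?_⟩
  intro x hx d _ hadj
  rw [Finset.mem_singleton] at hx
  subst hx; exact hadj

private lemma singleton_mem_left (v : V) : {v} ∈ leftCliqueSets G v := by
  rw [mem_leftCliqueSets]
  exact ⟨by simpa using G.isClique_singleton v, by simp, by simp⟩

private lemma one_le_scNum (v : V) : 1 ≤ scNum G v := by
  have h := Finset.le_sup (f := card) (singleton_mem_strong G v)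
  rwa [Finset.card_singleton] at h

private lemma scNum_le_lcNum (v : V) : scNum G v ≤ lcNum G v := by
  obtain ⟨C, hC, hCeq⟩ := Finset.exists_mem_eq_sup (strongCliqueSets G v)
    ⟨{v}, singleton_mem_strong G v⟩ card
  rw [mem_strongCliqueSets] at hC
  have : C ∈ leftCliqueSets G v := by
    rw [mem_leftCliqueSets]; exact ⟨hC.1, hC.2.1, hC.2.2.1⟩
  calc scNum G v = C.card := hCeq
    _ ≤ lcNum G v := Finset.le_sup this

private lemma one_le_lcNum (v : V) : 1 ≤ lcNum G v :=
  le_trans (one_le_scNum G v) (scNum_le_lcNum G v)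

private lemma lcNum_le {k : ℕ} (hclique : G.CliqueFree (k + 1)) (v : V) :
    lcNum G v ≤ k := by
  apply Finset.sup_le
  intro C hC
  rw [mem_leftCliqueSets] at hC
  by_contra h
  push_neg at h
  obtain ⟨B, hBC, hBcard⟩ := Finset.exists_subset_card_eq (s := C) (n := k + 1) h
  exact hclique B ⟨hC.1.subset (by exact_mod_cast hBC), hBcard⟩

/-- the key lemma: along an edge `u < v`, if the left clique numbers agree,
the strong clique number strictly increases. -/
private lemma key_lemma
    (hsemi : ∀ a b c d : V, a < b → b < c → c < d →
      G.Adj a b → G.Adj b c → G.Adj c d → ¬ G.Adj a c → ¬ G.Adj b d → False)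
    {u v : V} (huv : u < v) (hadj : G.Adj u v) (hl : lcNum G u = lcNum G v) :
    scNum G u < scNum G v := by
  classical
  -- a maximum left clique at u
  obtain ⟨L, hLmem, hLeq⟩ := Finset.exists_mem_eq_sup (leftCliqueSets G u)
    ⟨{u}, singleton_mem_left G u⟩ card
  rw [mem_leftCliqueSets] at hLmem
  obtain ⟨hLclique, huL, hLle⟩ := hLmem
  have hLcard : lcNum G u = L.card := hLeq
  -- there must be b ∈ L not adjacent to v
  have hb : ∃ b ∈ L, ¬ G.Adj b v := by
    by_contra h
    push_neg at h
    have hvL : v ∉ L := fun hv => absurd (hLle v hv) (not_le.mpr huv)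
    have hins : insert v L ∈ leftCliqueSets G v := by
      rw [mem_leftCliqueSets]
      refine ⟨?_, by simp, ?_⟩
      · rw [Finset.coe_insert]
        exact hLclique.insert fun b hb _ => (h b (by exact_mod_cast hb)).symm
      intro x hx
      rcases Finset.mem_insert.mp hx with rfl | hx
      · exact le_refl _
      · exact le_of_lt (lt_of_le_of_lt (hLle x hx) huv)
    have h1 : (insert v L).card ≤ lcNum G v := Finset.le_sup hins
    rw [Finset.card_insert_of_notMem hvL] at h1
    omega
  obtain ⟨b, hbL, hbv⟩ := hb
  have hbne : b ≠ u := fun h => hbv (h ▸ hadj)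
  have hbu : G.Adj b u := hLclique (by exact_mod_cast hbL) (by exact_mod_cast huL) hbne
  have hblt : b < u := lt_of_le_of_ne (hLle b hbL) hbne
  -- u is adjacent to every later neighbor of v
  have hforward : ∀ d, v < d → G.Adj v d → G.Adj u d := by
    intro d hvd hadjvd
    by_contra hud
    exact hsemi b u v d hblt huv hvd hbu hadj hadjvd hbv hud
  -- a maximum strong clique at u
  obtain ⟨S, hSmem, hSeq⟩ := Finset.exists_mem_eq_sup (strongCliqueSets G u)
    ⟨{u}, singleton_mem_strong G u⟩ card
  rw [mem_strongCliqueSets] at hSmem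
  obtain ⟨hSclique, huS, hSle, hSstrong⟩ := hSmem
  have hScard : scNum G u = S.card := hSeq
  have hSv : ∀ x ∈ S, G.Adj x v := fun x hx => hSstrong x hx v huv hadj
  have hvS : v ∉ S := fun hv => absurd (hSle v hv) (not_le.mpr huv)
  have hins : insert v S ∈ strongCliqueSets G v := by
    rw [mem_strongCliqueSets]
    refine ⟨?_, by simp, ?_, ?_⟩
    · rw [Finset.coe_insert]
      exact hSclique.insert fun x hx _ => (hSv x (by exact_mod_cast hx)).symm
    · intro x hx
      rcases Finset.mem_insert.mp hx with rfl | hx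
      · exact le_refl _
      · exact le_of_lt (lt_of_le_of_lt (hSle x hx) huv)
    · intro x hx d hvd hadjvd
      rcases Finset.mem_insert.mp hx with rfl | hx
      · exact hadjvd
      · exact hSstrong x hx d (lt_trans huv hvd) (hforward d hvd hadjvd)
  have h1 : (insert v S).card ≤ scNum G v := Finset.le_sup hins
  rw [Finset.card_insert_of_notMem hvS] at h1
  omega

/-- the numeric color of a vertex -/
private noncomputable def colNum (v : V) : ℕ :=
  triAux (lcNum G v - 1) + (scNum G v - 1)

private lemma colNum_lt {k : ℕ} (hclique : G.CliqueFree (k + 1)) (v : V) :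
    colNum G v < triAux k := by
  obtain ⟨m, hm⟩ : ∃ m, lcNum G v = m + 1 :=
    ⟨lcNum G v - 1, by have := one_le_lcNum G v; omega⟩
  have h1 : scNum G v ≤ m + 1 := hm ▸ scNum_le_lcNum G v
  have h2 : m + 1 ≤ k := hm ▸ lcNum_le G hclique v
  have h3 : triAux (m + 1) ≤ triAux k := triAux_mono h2
  have h4 : triAux (m + 1) = triAux m + (m + 1) := rfl
  unfold colNum
  rw [hm]
  simp only [Nat.add_sub_cancel]
  omega

private lemma colNum_lt_of_lc_lt {u v : V} (h : lcNum G u < lcNum G v) :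
    colNum G u < colNum G v := by
  obtain ⟨m, hm⟩ : ∃ m, lcNum G u = m + 1 :=
    ⟨lcNum G u - 1, by have := one_le_lcNum G u; omega⟩
  have h1 : scNum G u ≤ m + 1 := hm ▸ scNum_le_lcNum G u
  have h3 : triAux (m + 1) ≤ triAux (lcNum G v - 1) := triAux_mono (by omega)
  have h4 : triAux (m + 1) = triAux m + (m + 1) := rfl
  have h5 : scNum G v ≥ 1 := one_le_scNum G v
  unfold colNum
  rw [hm]
  simp only [Nat.add_sub_cancel]
  omega

private lemma colNum_ne
    (hsemi : ∀ a b c d : V, a < b → b < c → c < d →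
      G.Adj a b → G.Adj b c → G.Adj c d → ¬ G.Adj a c → ¬ G.Adj b d → False)
    {u v : V} (huv : u < v) (hadj : G.Adj u v) :
    colNum G u ≠ colNum G v := by
  rcases lt_trichotomy (lcNum G u) (lcNum G v) with h | h | h
  · exact ne_of_lt (colNum_lt_of_lc_lt G h)
  · have hs := key_lemma G hsemi huv hadj h
    have hsu := one_le_scNum G u
    unfold colNum
    rw [h]
    omega
  · exact (ne_of_lt (colNum_lt_of_lc_lt G h)).symm

end Aux

/-- A semi-comparability graph (an ordered graph with no four vertices
`a<b<c<d` with `ab, bc, cd` edges and `ac, bd` non-edges) with clique number at most `k`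
can be properly colored with at most `k(k+1)/2` colors. -/
theorem semiComparability_colorable {V : Type*} [Fintype V] [LinearOrder V]
    (G : SimpleGraph V) (k : ℕ)
    (hsemi : ∀ a b c d : V, a < b → b < c → c < d →
      G.Adj a b → G.Adj b c → G.Adj c d → ¬ G.Adj a c → ¬ G.Adj b d → False)
    (hclique : G.CliqueFree (k + 1)) :
    G.Colorable (k * (k + 1) / 2) := by
  rcases isEmpty_or_nonempty V with hV | hV
  · exact ⟨SimpleGraph.Coloring.mk (fun v => isEmptyElim v)
      (fun {a b} _ => isEmptyElim a)⟩
  · have htri : triAux k = k * (k + 1) / 2 := by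
      have := two_mul_triAux k
      omega
    have hbound : ∀ v : V, colNum G v < k * (k + 1) / 2 := fun v =>
      htri ▸ colNum_lt G hclique v
    refine ⟨SimpleGraph.Coloring.mk (fun v => ⟨colNum G v, hbound v⟩) ?_⟩
    intro a b hab heq
    have hcol : colNum G a = colNum G b := by
      simpa [Fin.mk.injEq] using heq
    rcases lt_trichotomy a b with h | h | h
    · exact colNum_ne G hsemi h hab hcol
    · exact hab.ne h
    · exact colNum_ne G hsemi h hab.symm hcol.symm
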